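/- Assuming the Post Correspondence Problem (over a binary alphabet) is undecidable, the regular intersection emptiness problem for Shuffled String Equivalence Modulo Padding over a binary alphabet is undecidable: there is no algorithm that, given a DFA A over Σ ∪ {ε} with |Σ| = 2, decides whether L(A) contains a word s₁t₁…sₙtₙ with h(s₁…sₙ) = h(t₁…tₙ). -/

import Mathlib

def odds {Γ : Type} : List Γ → List Γ
  | [] => []
  | [x] => [x]
  | x :: _ :: rest => x :: odds rest

def evens {Γ : Type} : List Γ → List Γ
  | [] => []
  | [_] => []
  | _ :: y :: rest => y :: evens rest

/-- Shuffled String Equivalence Modulo Padding over the alphabet `Σ ∪ {ε}`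
(modelled as `Option Γ`, `none` being the padding symbol `ε`). -/
def ShuffledEq (Γ : Type) : Set (List (Option Γ)) :=
  {w | w.length % 2 = 0 ∧ (odds w).reduceOption = (evens w).reduceOption}

/-- A PCP instance has a solution iff there is a nonempty index sequence with equal
concatenations. -/
def PCPSolvable {Γ : Type} (P : List (List Γ × List Γ)) : Prop :=
  ∃ is : List (Fin P.length), is ≠ [] ∧
    (is.map fun i => (P.get i).1).flatten = (is.map fun i => (P.get i).2).flatten

/-- Index of a letter of the alphabet `{0, 1, ε}`. -/
def letterIdx : Option (Fin 2) → ℕ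
  | none => 2
  | some i => i

/-- A coded DFA over the alphabet `{0, 1, ε}`: number of states, transition table,
start state, list of accepting states.  `codedAccepts D w` holds iff running the table on
`w` from the start state ends in an accepting state. -/
def codedAccepts (D : ℕ × List (List ℕ) × ℕ × List ℕ) (w : List (Option (Fin 2))) : Prop :=
  (w.foldl (fun q c => (D.2.1.getD q []).getD (letterIdx c) 0) D.2.2.1) ∈ D.2.2.2

namespace SR14

abbrev Sym := Option (Fin 2)
abbrev Inst := List (List (Fin 2) × List (Fin 2))

def K (P : Inst) : ℕ := P.length
def A (P : Inst) (i : ℕ) : List (Fin 2) := (P.getD i ([], [])).1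
def B (P : Inst) (i : ℕ) : List (Fin 2) := (P.getD i ([], [])).2
def nn (P : Inst) (i : ℕ) : ℕ := max (A P i).length (B P i).length

def padw (n : ℕ) (l : List (Fin 2)) : List Sym :=
  l.map some ++ List.replicate (n - l.length) none

def zipcat : List Sym → List Sym → List Sym
  | x :: xs, y :: ys => x :: y :: zipcat xs ys
  | _, _ => []

def core (P : Inst) (i : ℕ) : List Sym :=
  zipcat (padw (nn P i) (A P i)) (padw (nn P i) (B P i))

def shift (P : Inst) (i : ℕ) : ℕ := if (A P i).length = 0 then 1 else 0
def uu (P : Inst) (i : ℕ) : List Sym := (core P i).drop (shift P i)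
def rr (P : Inst) (i : ℕ) : ℕ := 2 * i + 2 + shift P i
def block (P : Inst) (i : ℕ) : List Sym :=
  List.replicate (rr P i) (none : Sym) ++ uu P i

/-- abstract states -/
inductive St : Type
  | dead | start | F
  | cnt (c : ℕ)
  | tile (i p : ℕ)
deriving DecidableEq

def M (P : Inst) : ℕ := 2 * K P + 3
def S (P : Inst) : ℕ := 2 * ((P.map fun t => t.1.length + t.2.length).foldr (· + ·) 0) + 2

open St in
def step (P : Inst) : St → Sym → St
  | dead, _ => dead
  | start, x => if x = none then cnt 1 else dead
  | F, x => if x = none then cnt 1 else dead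
  | cnt c, none => if c + 1 ≤ M P then cnt (c + 1) else dead
  | cnt c, some y =>
      let i := (c - 2) / 2
      if i < K P ∧ rr P i = c ∧ (uu P i)[0]? = some (some y) then
        (if (uu P i).length = 1 then F else tile i 1)
      else dead
  | tile i p, x =>
      if (uu P i)[p]? = some x then
        (if p + 1 = (uu P i).length then F else tile i (p + 1))
      else dead

def symN (l : List (Fin 2)) (m : ℕ) : ℕ := (l.map Fin.val).getD m 2

def coreN (P : Inst) (i j : ℕ) : ℕ :=
  if j % 2 = 0 then symN (A P i) (j / 2) else symN (B P i) (j / 2)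

def ulen (P : Inst) (i : ℕ) : ℕ := 2 * nn P i - shift P i

def uNidx (P : Inst) (i p : ℕ) : ℕ :=
  if p < ulen P i then coreN P i (p + shift P i) else 3

def fnum (P : Inst) (q t : ℕ) : ℕ :=
  if q = 0 then 0
  else if q ≤ 2 then (if t = 2 then 3 else 0)
  else if q < 3 + M P then
    if t = 2 then (if q - 1 ≤ M P then q + 1 else 0)
    else
      (if ((q - 2) - 2) / 2 < K P ∧ rr P (((q - 2) - 2) / 2) = q - 2 ∧
          uNidx P (((q - 2) - 2) / 2) 0 = t then
        (if ulen P (((q - 2) - 2) / 2) = 1 then 2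
         else 3 + M P + (((q - 2) - 2) / 2) * S P + 1)
      else 0)
  else
    (if uNidx P ((q - (3 + M P)) / S P) ((q - (3 + M P)) % S P) = t then
      (if (q - (3 + M P)) % S P + 1 = ulen P ((q - (3 + M P)) / S P) then 2 else q + 1)
    else 0)

def enc (P : Inst) : St → ℕ
  | .dead => 0
  | .start => 1
  | .F => 2
  | .cnt c => 2 + c
  | .tile i p => 3 + M P + i * S P + p

def N (P : Inst) : ℕ := 3 + M P + K P * S P
def tbl (P : Inst) : List (List ℕ) :=
  (List.range (N P)).map fun q => [fnum P q 0, fnum P q 1, fnum P q 2]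
def dfa (P : Inst) : ℕ × List (List ℕ) × ℕ × List ℕ := (N P, tbl P, 1, [2])

def condA (P : Inst) : Bool :=
  decide (((P.map fun t => t.1.length + t.2.length).foldr (· * ·) 1) = 0)

def g (P : Inst) : ℕ × List (List ℕ) × ℕ × List ℕ :=
  if condA P then (1, [[0, 0, 0]], 0, [0]) else dfa P

def Good (P : Inst) : St → Prop
  | .dead => True
  | .start => True
  | .F => True
  | .cnt c => 1 ≤ c ∧ c ≤ M P
  | .tile i p => i < K P ∧ 1 ≤ p ∧ p < (uu P i).length

end SR14

namespace SR14

theorem odds_append {Γ : Type} : ∀ u v : List Γ, u.length % 2 = 0 →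
    odds (u ++ v) = odds u ++ odds v := by
  intro u
  induction u using odds.induct with
  | case1 => intro v _; simp [odds, evens]
  | case2 x => intro v h; simp at h
  | case3 x y rest ih =>
    intro v h
    simp only [List.length_cons] at h
    have h' : rest.length % 2 = 0 := by omega
    simp [odds, ih v h']

theorem evens_append {Γ : Type} : ∀ u v : List Γ, u.length % 2 = 0 →
    evens (u ++ v) = evens u ++ evens v := by
  intro u
  induction u using evens.induct with
  | case1 => intro v _; simp [odds, evens]
  | case2 x => intro v h; simp at h
  | case3 x y rest ih =>
    intro v h
    simp only [List.length_cons] at h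
    have h' : rest.length % 2 = 0 := by omega
    simp [evens, ih v h']

theorem odds_replicate {Γ : Type} (x : Γ) : ∀ m, odds (List.replicate (2 * m) x) = List.replicate m x := by
  intro m
  induction m with
  | zero => simp [odds]
  | succ m ih =>
    have : 2 * (m + 1) = (2 * m) + 1 + 1 := by ring
    rw [this, List.replicate_succ, List.replicate_succ, odds, List.replicate_succ, ih]

theorem evens_replicate {Γ : Type} (x : Γ) : ∀ m, evens (List.replicate (2 * m) x) = List.replicate m x := by
  intro m
  induction m with
  | zero => simp [evens]
  | succ m ih =>
    have : 2 * (m + 1) = (2 * m) + 1 + 1 := by ring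
    rw [this, List.replicate_succ, List.replicate_succ, evens, List.replicate_succ, ih]

theorem reduceOption_replicate_none {Γ : Type} (m : ℕ) :
    (List.replicate m (none : Option Γ)).reduceOption = [] := by
  induction m with
  | zero => simp
  | succ m ih => rw [List.replicate_succ]; simpa using ih

theorem reduceOption_map_some {Γ : Type} (l : List Γ) :
    (l.map some).reduceOption = l := by
  induction l with
  | nil => simp
  | cons x l ih => simpa [List.reduceOption_cons_of_some] using ih

theorem zipcat_length : ∀ xs ys : List Sym, xs.length = ys.length →
    (zipcat xs ys).length = 2 * xs.length := by
  intro xs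
  induction xs with
  | nil => intro ys h; cases ys with
    | nil => simp [zipcat]
    | cons y ys => simp at h
  | cons x xs ih =>
    intro ys h
    cases ys with
    | nil => simp at h
    | cons y ys =>
      simp only [List.length_cons] at h ⊢
      rw [zipcat]
      simp only [List.length_cons, ih ys (by omega)]
      ring

theorem odds_zipcat : ∀ xs ys : List Sym, xs.length = ys.length →
    odds (zipcat xs ys) = xs := by
  intro xs
  induction xs with
  | nil => intro ys h; cases ys with
    | nil => simp [zipcat, odds]
    | cons y ys => simp at h
  | cons x xs ih =>
    intro ys h
    cases ys with
    | nil => simp at h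
    | cons y ys =>
      simp only [List.length_cons] at h
      rw [zipcat, odds, ih ys (by omega)]

theorem evens_zipcat : ∀ xs ys : List Sym, xs.length = ys.length →
    evens (zipcat xs ys) = ys := by
  intro xs
  induction xs with
  | nil => intro ys h; cases ys with
    | nil => simp [zipcat, evens]
    | cons y ys => simp at h
  | cons x xs ih =>
    intro ys h
    cases ys with
    | nil => simp at h
    | cons y ys =>
      simp only [List.length_cons] at h
      rw [zipcat, evens, ih ys (by omega)]

theorem zipcat_getElem? : ∀ xs ys : List Sym, xs.length = ys.length → ∀ j,
    (zipcat xs ys)[j]? = if j % 2 = 0 then xs[j / 2]? else ys[j / 2]? := by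
  intro xs
  induction xs with
  | nil => intro ys h j; cases ys with
    | nil => simp [zipcat]
    | cons y ys => simp at h
  | cons x xs ih =>
    intro ys h j
    cases ys with
    | nil => simp at h
    | cons y ys =>
      simp only [List.length_cons] at h
      rw [zipcat]
      match j with
      | 0 => simp
      | 1 => simp
      | (j + 2) =>
        have h2 : (j + 2) % 2 = j % 2 := by omega
        have h3 : (j + 2) / 2 = j / 2 + 1 := by omega
        simp only [List.getElem?_cons_succ, ih ys (by omega) j, h2, h3]

end SR14

namespace SR14

theorem padw_length (n : ℕ) (l : List (Fin 2)) (h : l.length ≤ n) :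
    (padw n l).length = n := by
  simp [padw]; omega

theorem symN_lt (l : List (Fin 2)) (m : ℕ) : symN l m < 3 := by
  unfold symN
  rcases lt_or_ge m l.length with h | h
  · rw [List.getD_eq_getElem _ _ (by simpa using h)]
    simp only [List.getElem_map]
    have := (l[m]).isLt; omega
  · rw [List.getD_eq_default _ _ (by simpa using h)]; omega

theorem padw_letter (n : ℕ) (l : List (Fin 2)) (m : ℕ) (hln : l.length ≤ n) (hm : m < n) :
    ∃ s : Sym, (padw n l)[m]? = some s ∧ letterIdx s = symN l m := by
  unfold padw symN
  rcases lt_or_ge m l.length with h | h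
  · refine ⟨some l[m], ?_, ?_⟩
    · rw [List.getElem?_append, if_pos (by simpa using h)]
      simp [List.getElem?_map, List.getElem?_eq_getElem h]
    · rw [List.getD_eq_getElem _ _ (by simpa using h)]
      simp [letterIdx]
  · refine ⟨none, ?_, ?_⟩
    · rw [List.getElem?_append_right (by simpa using h)]
      simp only [List.length_map, List.getElem?_replicate]
      rw [if_pos (by omega)]
    · rw [List.getD_eq_default _ _ (by simpa using h)]
      simp [letterIdx]

theorem len_A_le (P : Inst) (i : ℕ) : (A P i).length ≤ nn P i := le_max_left _ _
theorem len_B_le (P : Inst) (i : ℕ) : (B P i).length ≤ nn P i := le_max_right _ _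

theorem core_length (P : Inst) (i : ℕ) : (core P i).length = 2 * nn P i := by
  unfold core
  rw [zipcat_length _ _ (by rw [padw_length _ _ (len_A_le P i), padw_length _ _ (len_B_le P i)])]
  rw [padw_length _ _ (len_A_le P i)]

theorem shift_le (P : Inst) (i : ℕ) : shift P i ≤ 1 := by
  unfold shift; split <;> omega

theorem uu_length (P : Inst) (i : ℕ) : (uu P i).length = ulen P i := by
  unfold uu ulen
  rw [List.length_drop, core_length]

theorem core_getElem? (P : Inst) (i j : ℕ) :
    (core P i)[j]? = if j % 2 = 0 then (padw (nn P i) (A P i))[j / 2]?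
      else (padw (nn P i) (B P i))[j / 2]? := by
  unfold core
  exact zipcat_getElem? _ _
    (by rw [padw_length _ _ (len_A_le P i), padw_length _ _ (len_B_le P i)]) j

theorem uu_letter (P : Inst) (i p : ℕ) (hp : p < ulen P i) :
    ∃ s : Sym, (uu P i)[p]? = some s ∧ letterIdx s = coreN P i (p + shift P i) := by
  have hs := shift_le P i
  have hul : ulen P i = 2 * nn P i - shift P i := rfl
  have hj : p + shift P i < 2 * nn P i := by omega
  have h1 : (uu P i)[p]? = (core P i)[shift P i + p]? := List.getElem?_drop
  rw [Nat.add_comm] at h1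
  rw [h1, core_getElem?]
  unfold coreN
  by_cases hpar : (p + shift P i) % 2 = 0
  · rw [if_pos hpar, if_pos hpar]
    exact padw_letter _ _ _ (len_A_le P i) (by omega)
  · rw [if_neg hpar, if_neg hpar]
    exact padw_letter _ _ _ (len_B_le P i) (by omega)

theorem uNidx_eq (P : Inst) (i p : ℕ) :
    uNidx P i p = (((uu P i)[p]?).map letterIdx).getD 3 := by
  unfold uNidx
  by_cases hp : p < ulen P i
  · rw [if_pos hp]
    obtain ⟨s, hs, hl⟩ := uu_letter P i p hp
    rw [hs]; simp [hl]
  · rw [if_neg hp]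
    have : (uu P i)[p]? = none := by
      rw [List.getElem?_eq_none]
      rw [uu_length]; omega
    rw [this]; simp

theorem letterIdx_lt (s : Sym) : letterIdx s < 3 := by
  cases s with
  | none => simp [letterIdx]
  | some y => simp [letterIdx]; have := y.isLt; omega

theorem letterIdx_inj {s t : Sym} (h : letterIdx s = letterIdx t) : s = t := by
  cases s with
  | none => cases t with
    | none => rfl
    | some y => simp [letterIdx] at h; have := y.isLt; omega
  | some y => cases t with
    | none => simp [letterIdx] at h; have := y.isLt; omega
    | some z =>
      simp only [letterIdx] at h
      have : y = z := Fin.ext (by exact_mod_cast h)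
      rw [this]

theorem uNidx_iff (P : Inst) (i p : ℕ) (x : Sym) :
    uNidx P i p = letterIdx x ↔ (uu P i)[p]? = some x := by
  rw [uNidx_eq]
  cases hs : (uu P i)[p]? with
  | none =>
    simp only [Option.map_none, Option.getD_none]
    constructor
    · intro h; have := letterIdx_lt x; omega
    · intro h; simp at h
  | some s =>
    simp only [Option.map_some, Option.getD_some]
    constructor
    · intro h; rw [letterIdx_inj h]
    · intro h
      have : s = x := by injection h
      rw [this]

theorem rr_dec (P : Inst) (i : ℕ) : (rr P i - 2) / 2 = i := by
  have := shift_le P i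
  unfold rr
  omega

end SR14

namespace SR14

def GoodTile (P : Inst) (i : ℕ) : Prop := A P i ≠ [] ∨ B P i ≠ []

theorem nn_pos (P : Inst) (i : ℕ) (h : GoodTile P i) : 1 ≤ nn P i := by
  rcases h with h | h
  · have : 1 ≤ (A P i).length := by
      cases hA : A P i with
      | nil => exact absurd hA h
      | cons a l => simp
    exact le_trans this (len_A_le P i)
  · have : 1 ≤ (B P i).length := by
      cases hB : B P i with
      | nil => exact absurd hB h
      | cons a l => simp
    exact le_trans this (len_B_le P i)

theorem ulen_pos (P : Inst) (i : ℕ) (h : GoodTile P i) : 1 ≤ ulen P i := by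
  have h1 := nn_pos P i h
  have h2 := shift_le P i
  unfold ulen; omega

theorem shift_eq_zero (P : Inst) (i : ℕ) (h : A P i ≠ []) : shift P i = 0 := by
  unfold shift
  rw [if_neg (by simpa using h)]

theorem shift_eq_one (P : Inst) (i : ℕ) (h : A P i = []) : shift P i = 1 := by
  unfold shift
  rw [if_pos (by simp [h])]

theorem core_cons (P : Inst) (i : ℕ) (hA : A P i = []) (hgt : GoodTile P i) :
    core P i = none :: (core P i).drop 1 := by
  have hn := nn_pos P i hgt
  have hlen : 0 < (core P i).length := by
    have := core_length P i; omega
  have h0 : (core P i)[0]? = some none := by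
    rw [core_getElem?]
    simp only [Nat.zero_mod, if_pos rfl, Nat.zero_div]
    unfold padw
    rw [hA]
    simp only [List.map_nil, List.nil_append, List.length_nil, Nat.sub_zero,
      List.getElem?_replicate]
    have : 0 < nn P i := by omega
    simp [this]
  have h1 : (core P i)[0] = none := by
    have h2 := List.getElem?_eq_getElem hlen
    rw [h0] at h2
    exact (Option.some.inj h2).symm
  have h2 := List.drop_eq_getElem_cons (l := core P i) (i := 0) hlen
  simp only [List.drop_zero] at h2
  conv_lhs => rw [h2]
  rw [h1]

theorem block_alt (P : Inst) (i : ℕ) (hgt : GoodTile P i) :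
    block P i = List.replicate (2 * i + 2) (none : Sym) ++ core P i := by
  unfold block uu rr
  by_cases hA : A P i = []
  · rw [shift_eq_one P i hA]
    rw [core_cons P i hA hgt]
    simp only [List.drop_succ_cons, List.drop_zero]
    rw [show 2 * i + 2 + 1 = (2 * i + 2) + 1 from rfl, List.replicate_succ']
    simp
  · rw [shift_eq_zero P i hA]
    simp

theorem block_length_even (P : Inst) (i : ℕ) (hgt : GoodTile P i) :
    (block P i).length % 2 = 0 := by
  rw [block_alt P i hgt]
  simp only [List.length_append, List.length_replicate, core_length]
  omega

theorem block_odds (P : Inst) (i : ℕ) (hgt : GoodTile P i) :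
    (odds (block P i)).reduceOption = A P i := by
  rw [block_alt P i hgt]
  rw [odds_append _ _ (by simp)]
  rw [show (2 * i + 2 : ℕ) = 2 * (i + 1) from by ring, odds_replicate]
  rw [List.reduceOption_append, reduceOption_replicate_none]
  unfold core
  rw [odds_zipcat _ _ (by rw [padw_length _ _ (len_A_le P i), padw_length _ _ (len_B_le P i)])]
  unfold padw
  rw [List.reduceOption_append, reduceOption_replicate_none, reduceOption_map_some]
  simp

theorem block_evens (P : Inst) (i : ℕ) (hgt : GoodTile P i) :
    (evens (block P i)).reduceOption = B P i := by
  rw [block_alt P i hgt]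
  rw [evens_append _ _ (by simp)]
  rw [show (2 * i + 2 : ℕ) = 2 * (i + 1) from by ring, evens_replicate]
  rw [List.reduceOption_append, reduceOption_replicate_none]
  unfold core
  rw [evens_zipcat _ _ (by rw [padw_length _ _ (len_A_le P i), padw_length _ _ (len_B_le P i)])]
  unfold padw
  rw [List.reduceOption_append, reduceOption_replicate_none, reduceOption_map_some]
  simp

theorem uu_head (P : Inst) (i : ℕ) (hgt : GoodTile P i) :
    ∃ y : Fin 2, (uu P i)[0]? = some (some y) := by
  obtain ⟨s, hs, hl⟩ := uu_letter P i 0 (by have := ulen_pos P i hgt; omega)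
  simp only [Nat.zero_add] at hl
  have hlt : coreN P i (shift P i) < 2 := by
    by_cases hA : A P i = []
    · rw [shift_eq_one P i hA]
      unfold coreN
      rw [if_neg (by omega)]
      have hB : B P i ≠ [] := by
        rcases hgt with h | h
        · exact absurd hA h
        · exact h
      unfold symN
      have hb : 0 < (B P i).length := List.length_pos_iff.mpr hB
      rw [List.getD_eq_getElem _ _ (by simpa using hb)]
      simp only [List.getElem_map]
      have := ((B P i)[0]).isLt
      exact Fin.isLt _
    · rw [shift_eq_zero P i hA]
      unfold coreN
      rw [if_pos (by omega)]
      unfold symN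
      have ha : 0 < (A P i).length := List.length_pos_iff.mpr hA
      rw [List.getD_eq_getElem _ _ (by simpa using ha)]
      simp only [List.getElem_map]
      have := ((A P i)[0]).isLt
      omega
  rw [← hl] at hlt
  cases s with
  | none => simp [letterIdx] at hlt
  | some y => exact ⟨y, hs⟩

theorem rr_le_M (P : Inst) (i : ℕ) (hi : i < K P) : rr P i ≤ M P := by
  have := shift_le P i
  unfold rr M
  omega

theorem lensum_le (P : Inst) (i : ℕ) (hi : i < K P) :
    (A P i).length + (B P i).length ≤ (P.map fun t => t.1.length + t.2.length).foldr (· + ·) 0 := by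
  have hi' : i < P.length := hi
  have hmem : P[i] ∈ P := List.getElem_mem hi'
  have hA : A P i = P[i].1 := by unfold A; rw [List.getD_eq_getElem _ _ hi']
  have hB : B P i = P[i].2 := by unfold B; rw [List.getD_eq_getElem _ _ hi']
  rw [hA, hB]
  have : (P[i].1.length + P[i].2.length) ∈ P.map fun t => t.1.length + t.2.length :=
    List.mem_map_of_mem hmem
  calc P[i].1.length + P[i].2.length
      ≤ (P.map fun t => t.1.length + t.2.length).sum :=
        List.single_le_sum (fun x _ => Nat.zero_le x) _ this
    _ = _ := by rw [List.sum_eq_foldr]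

theorem ulen_lt_S (P : Inst) (i : ℕ) (hi : i < K P) : ulen P i < S P := by
  have h1 := lensum_le P i hi
  have h2 : nn P i ≤ (A P i).length + (B P i).length := by
    unfold nn; omega
  unfold ulen S
  omega

theorem enc_lt_N (P : Inst) (q : St) (hq : Good P q) : enc P q < N P := by
  cases q with
  | dead => simp only [enc, N, M]; omega
  | start => simp only [enc, N, M]; omega
  | F => simp only [enc, N, M]; omega
  | cnt c =>
    obtain ⟨h1, h2⟩ := hq
    simp only [enc, N]
    omega
  | tile i p =>
    obtain ⟨h1, h2, h3⟩ := hq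
    have h5 : ulen P i < S P := ulen_lt_S P i h1
    have h6 : (uu P i).length = ulen P i := uu_length P i
    have h4 : p < S P := by omega
    have h7 : (i + 1) * S P ≤ K P * S P := Nat.mul_le_mul_right _ (by omega)
    have e : (i + 1) * S P = i * S P + S P := by ring
    simp only [enc, N]
    omega

end SR14

namespace SR14

theorem S_pos (P : Inst) : 0 < S P := by unfold S; omega

theorem fnum_dead (P : Inst) (t : ℕ) : fnum P 0 t = 0 := by simp [fnum]

theorem fnum_start (P : Inst) (t : ℕ) : fnum P 1 t = if t = 2 then 3 else 0 := by
  unfold fnum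
  rw [if_neg (by omega), if_pos (by omega)]

theorem fnum_F (P : Inst) (t : ℕ) : fnum P 2 t = if t = 2 then 3 else 0 := by
  unfold fnum
  rw [if_neg (by omega), if_pos (by omega)]

theorem fnum_cnt (P : Inst) (c t : ℕ) (h1 : 1 ≤ c) (h2 : c ≤ M P) :
    fnum P (2 + c) t =
      if t = 2 then (if c + 1 ≤ M P then 2 + (c + 1) else 0)
      else
        (if (c - 2) / 2 < K P ∧ rr P ((c - 2) / 2) = c ∧ uNidx P ((c - 2) / 2) 0 = t then
          (if ulen P ((c - 2) / 2) = 1 then 2 else 3 + M P + ((c - 2) / 2) * S P + 1)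
        else 0) := by
  unfold fnum
  rw [if_neg (by omega), if_neg (by omega), if_pos (by omega)]
  rw [show 2 + c - 2 = c by omega, show 2 + c - 1 = c + 1 by omega,
    show 2 + c + 1 = 2 + (c + 1) by omega]

theorem fnum_tile (P : Inst) (i p t : ℕ) (hp : p < S P) :
    fnum P (3 + M P + i * S P + p) t =
      if uNidx P i p = t then
        (if p + 1 = ulen P i then 2 else (3 + M P + i * S P + p) + 1)
      else 0 := by
  have hS := S_pos P
  unfold fnum
  rw [if_neg (by omega), if_neg (by omega), if_neg (by omega)]
  have hsub : 3 + M P + i * S P + p - (3 + M P) = p + i * S P := by omega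
  have hd : (p + i * S P) / S P = i := by
    rw [Nat.add_mul_div_right _ _ hS, Nat.div_eq_of_lt hp]; omega
  have hm : (p + i * S P) % S P = p := by
    rw [Nat.add_mul_mod_self_right, Nat.mod_eq_of_lt hp]
  rw [hsub, hd, hm]

theorem letterIdx_some (y : Fin 2) : letterIdx (some y) ≠ 2 := by
  simp only [letterIdx]; have := y.isLt; omega

theorem M_ge (P : Inst) : 3 ≤ M P := by unfold M; omega

theorem step_good (P : Inst) (q : St) (hq : Good P q) (x : Sym) :
    Good P (step P q x) := by
  cases q with
  | dead => exact trivial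
  | start =>
    cases x with
    | none =>
      show Good P (if (none : Sym) = none then St.cnt 1 else St.dead)
      rw [if_pos rfl]; exact ⟨by omega, by have := M_ge P; omega⟩
    | some y =>
      show Good P (if (some y : Sym) = none then St.cnt 1 else St.dead)
      rw [if_neg (by exact Option.some_ne_none y)]; exact trivial
  | F =>
    cases x with
    | none =>
      show Good P (if (none : Sym) = none then St.cnt 1 else St.dead)
      rw [if_pos rfl]; exact ⟨by omega, by have := M_ge P; omega⟩
    | some y =>
      show Good P (if (some y : Sym) = none then St.cnt 1 else St.dead)
      rw [if_neg (by exact Option.some_ne_none y)]; exact trivial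
  | cnt c =>
    obtain ⟨h1, h2⟩ := hq
    cases x with
    | none =>
      show Good P (if c + 1 ≤ M P then St.cnt (c + 1) else St.dead)
      by_cases h : c + 1 ≤ M P
      · rw [if_pos h]; exact ⟨by omega, h⟩
      · rw [if_neg h]; exact trivial
    | some y =>
      show Good P (if (c - 2) / 2 < K P ∧ rr P ((c - 2) / 2) = c ∧
          (uu P ((c - 2) / 2))[0]? = some (some y) then
          (if (uu P ((c - 2) / 2)).length = 1 then St.F else St.tile ((c - 2) / 2) 1)
        else St.dead)
      by_cases hcond : (c - 2) / 2 < K P ∧ rr P ((c - 2) / 2) = c ∧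
          (uu P ((c - 2) / 2))[0]? = some (some y)
      · rw [if_pos hcond]
        by_cases hlen : (uu P ((c - 2) / 2)).length = 1
        · rw [if_pos hlen]; exact trivial
        · rw [if_neg hlen]
          refine ⟨hcond.1, le_refl 1, ?_⟩
          have h3 := hcond.2.2
          have h4 : 0 < (uu P ((c - 2) / 2)).length := by
            by_contra h
            rw [List.getElem?_eq_none (by omega)] at h3
            cases h3
          omega
      · rw [if_neg hcond]; exact trivial
  | tile i p =>
    obtain ⟨h1, h2, h3⟩ := hq
    show Good P (if (uu P i)[p]? = some x then
        (if p + 1 = (uu P i).length then St.F else St.tile i (p + 1)) else St.dead)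
    by_cases hcond : (uu P i)[p]? = some x
    · rw [if_pos hcond]
      by_cases hlen : p + 1 = (uu P i).length
      · rw [if_pos hlen]; exact trivial
      · rw [if_neg hlen]
        exact ⟨h1, by omega, by omega⟩
    · rw [if_neg hcond]; exact trivial

theorem enc_step (P : Inst) (q : St) (hq : Good P q) (x : Sym) :
    fnum P (enc P q) (letterIdx x) = enc P (step P q x) := by
  cases q with
  | dead => simp [enc, step, fnum_dead]
  | start =>
    cases x with
    | none =>
      show fnum P 1 2 = enc P (if (none : Sym) = none then St.cnt 1 else St.dead)
      rw [fnum_start, if_pos rfl, if_pos rfl]; rfl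
    | some y =>
      show fnum P 1 (letterIdx (some y)) =
        enc P (if (some y : Sym) = none then St.cnt 1 else St.dead)
      rw [fnum_start, if_neg (letterIdx_some y), if_neg (Option.some_ne_none y)]; rfl
  | F =>
    cases x with
    | none =>
      show fnum P 2 2 = enc P (if (none : Sym) = none then St.cnt 1 else St.dead)
      rw [fnum_F, if_pos rfl, if_pos rfl]; rfl
    | some y =>
      show fnum P 2 (letterIdx (some y)) =
        enc P (if (some y : Sym) = none then St.cnt 1 else St.dead)
      rw [fnum_F, if_neg (letterIdx_some y), if_neg (Option.some_ne_none y)]; rfl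
  | cnt c =>
    obtain ⟨h1, h2⟩ := hq
    cases x with
    | none =>
      show fnum P (2 + c) 2 = enc P (if c + 1 ≤ M P then St.cnt (c + 1) else St.dead)
      rw [fnum_cnt P c _ h1 h2, if_pos rfl]
      by_cases h : c + 1 ≤ M P
      · rw [if_pos h, if_pos h]; rfl
      · rw [if_neg h, if_neg h]; rfl
    | some y =>
      show fnum P (2 + c) (letterIdx (some y)) =
        enc P (if (c - 2) / 2 < K P ∧ rr P ((c - 2) / 2) = c ∧
            (uu P ((c - 2) / 2))[0]? = some (some y) then
            (if (uu P ((c - 2) / 2)).length = 1 then St.F else St.tile ((c - 2) / 2) 1)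
          else St.dead)
      rw [fnum_cnt P c _ h1 h2, if_neg (letterIdx_some y)]
      have hiff : (uNidx P ((c - 2) / 2) 0 = letterIdx (some y)) ↔
          ((uu P ((c - 2) / 2))[0]? = some (some y)) := uNidx_iff P _ 0 (some y)
      by_cases hcond : (c - 2) / 2 < K P ∧ rr P ((c - 2) / 2) = c ∧
          (uu P ((c - 2) / 2))[0]? = some (some y)
      · rw [if_pos ⟨hcond.1, hcond.2.1, hiff.mpr hcond.2.2⟩, if_pos hcond]
        rw [show ulen P ((c - 2) / 2) = (uu P ((c - 2) / 2)).length from (uu_length P _).symm]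
        by_cases hlen : (uu P ((c - 2) / 2)).length = 1
        · rw [if_pos hlen, if_pos hlen]; rfl
        · rw [if_neg hlen, if_neg hlen]; rfl
      · rw [if_neg (fun h => hcond ⟨h.1, h.2.1, hiff.mp h.2.2⟩), if_neg hcond]
        rfl
  | tile i p =>
    obtain ⟨h1, h2, h3⟩ := hq
    have hpS : p < S P := by
      have := ulen_lt_S P i h1
      have := uu_length P i
      omega
    show fnum P (3 + M P + i * S P + p) (letterIdx x) =
      enc P (if (uu P i)[p]? = some x then
        (if p + 1 = (uu P i).length then St.F else St.tile i (p + 1)) else St.dead)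
    rw [fnum_tile P i p _ hpS]
    have hiff : (uNidx P i p = letterIdx x) ↔ ((uu P i)[p]? = some x) := uNidx_iff P i p x
    by_cases hcond : (uu P i)[p]? = some x
    · rw [if_pos (hiff.mpr hcond), if_pos hcond]
      rw [show ulen P i = (uu P i).length from (uu_length P i).symm]
      by_cases hlen : p + 1 = (uu P i).length
      · rw [if_pos hlen, if_pos hlen]; rfl
      · rw [if_neg hlen, if_neg hlen]; rfl
    · rw [if_neg (fun h => hcond (hiff.mp h)), if_neg hcond]
      rfl

theorem lk_eq (P : Inst) (q t : ℕ) (hq : q < N P) (ht : t < 3) :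
    ((tbl P).getD q []).getD t 0 = fnum P q t := by
  have h1 : (tbl P)[q]? = some [fnum P q 0, fnum P q 1, fnum P q 2] := by
    unfold tbl
    rw [List.getElem?_map, List.getElem?_range hq]
    rfl
  have h2 : (tbl P).getD q [] = [fnum P q 0, fnum P q 1, fnum P q 2] := by
    rw [List.getD_eq_getElem?_getD, h1]; rfl
  rw [h2]
  interval_cases t <;> rfl

theorem run_bridge (P : Inst) (w : List Sym) : ∀ q : St, Good P q →
    w.foldl (fun s c => ((tbl P).getD s []).getD (letterIdx c) 0) (enc P q)
      = enc P (w.foldl (step P) q) ∧ Good P (w.foldl (step P) q) := by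
  induction w with
  | nil => intro q hq; exact ⟨rfl, hq⟩
  | cons x w ih =>
    intro q hq
    simp only [List.foldl_cons]
    rw [lk_eq P (enc P q) (letterIdx x) (enc_lt_N P q hq) (letterIdx_lt x),
      enc_step P q hq x]
    exact ih (step P q x) (step_good P q hq x)

theorem enc_eq_two (P : Inst) (q : St) (hq : Good P q) (h : enc P q = 2) : q = St.F := by
  cases q with
  | dead => simp [enc] at h
  | start => simp [enc] at h
  | F => rfl
  | cnt c => obtain ⟨h1, _⟩ := hq; simp only [enc] at h; omega
  | tile i p => simp only [enc] at h; have := M_ge P; omega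

theorem accepts_iff (P : Inst) (w : List Sym) :
    codedAccepts (dfa P) w ↔ w.foldl (step P) St.start = St.F := by
  unfold codedAccepts dfa
  simp only [List.mem_singleton]
  obtain ⟨hb, hg⟩ := run_bridge P w St.start trivial
  have h1 : (1 : ℕ) = enc P St.start := rfl
  rw [h1, hb]
  constructor
  · intro h; exact enc_eq_two P _ hg h
  · intro h; rw [h]; rfl

end SR14

namespace SR14

theorem step_start_none (P : Inst) : step P St.start none = St.cnt 1 := by
  show (if (none : Sym) = none then St.cnt 1 else St.dead) = St.cnt 1
  rw [if_pos rfl]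

theorem step_F_none (P : Inst) : step P St.F none = St.cnt 1 := by
  show (if (none : Sym) = none then St.cnt 1 else St.dead) = St.cnt 1
  rw [if_pos rfl]

theorem step_start_eq_F (P : Inst) (x : Sym) : step P St.start x = step P St.F x := rfl

theorem run_dead (P : Inst) (l : List Sym) : l.foldl (step P) St.dead = St.dead := by
  induction l with
  | nil => rfl
  | cons x l ih => simpa [List.foldl_cons, show step P St.dead x = St.dead from rfl] using ih

theorem run_cnt_replicate (P : Inst) : ∀ (m c : ℕ), c + m ≤ M P →
    (List.replicate m (none : Sym)).foldl (step P) (St.cnt c) = St.cnt (c + m) := by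
  intro m
  induction m with
  | zero => intro c _; rfl
  | succ m ih =>
    intro c h
    rw [List.replicate_succ, List.foldl_cons]
    have h1 : step P (St.cnt c) none = St.cnt (c + 1) := by
      show (if c + 1 ≤ M P then St.cnt (c + 1) else St.dead) = St.cnt (c + 1)
      rw [if_pos (by omega)]
    rw [h1, ih (c + 1) (by omega)]
    congr 1
    omega

theorem run_tile (P : Inst) (i : ℕ) : ∀ (l : List Sym) (p : ℕ), p < (uu P i).length →
    l = (uu P i).drop p → l.foldl (step P) (St.tile i p) = St.F := by
  intro l
  induction l with
  | nil =>
    intro p hp hl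
    have : ((uu P i).drop p).length = (uu P i).length - p := List.length_drop
    rw [← hl] at this
    simp at this
    omega
  | cons x l ih =>
    intro p hp hl
    rw [List.drop_eq_getElem_cons hp] at hl
    have hx : x = (uu P i)[p] := by injection hl with h1 _
    have hl' : l = (uu P i).drop (p + 1) := by injection hl
    rw [List.foldl_cons]
    have hget : (uu P i)[p]? = some x := by
      rw [hx]; exact List.getElem?_eq_getElem hp
    have hstep : step P (St.tile i p) x =
        (if p + 1 = (uu P i).length then St.F else St.tile i (p + 1)) := by
      show (if (uu P i)[p]? = some x then
        (if p + 1 = (uu P i).length then St.F else St.tile i (p + 1)) else St.dead) = _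
      rw [if_pos hget]
    rw [hstep]
    by_cases hlen : p + 1 = (uu P i).length
    · rw [if_pos hlen]
      have : l = [] := by
        rw [hl', hlen]; simp
      rw [this]; rfl
    · rw [if_neg hlen]
      exact ih (p + 1) (by omega) hl'

theorem run_block (P : Inst) (i : ℕ) (hi : i < K P) (hgt : GoodTile P i) (q : St)
    (hq : q = St.start ∨ q = St.F) : (block P i).foldl (step P) q = St.F := by
  unfold block
  rw [List.foldl_append]
  have hrr : 1 ≤ rr P i := by unfold rr; omega
  have hrM : rr P i ≤ M P := rr_le_M P i hi
  have hrep : (List.replicate (rr P i) (none : Sym)).foldl (step P) q = St.cnt (rr P i) := by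
    have : rr P i = (rr P i - 1) + 1 := by omega
    rw [this, List.replicate_succ, List.foldl_cons]
    have hq1 : step P q none = St.cnt 1 := by
      rcases hq with h | h <;> rw [h]
      · exact step_start_none P
      · exact step_F_none P
    rw [hq1, run_cnt_replicate P _ 1 (by omega)]
    congr 1
    omega
  rw [hrep]
  obtain ⟨y, hy⟩ := uu_head P i hgt
  have hup : 0 < (uu P i).length := by
    by_contra h
    rw [List.getElem?_eq_none (by omega)] at hy
    cases hy
  have huu : uu P i = (uu P i)[0] :: (uu P i).drop 1 := by
    have := List.drop_eq_getElem_cons (l := uu P i) (i := 0) hup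
    simpa using this
  have h0 : (uu P i)[0] = some y := by
    have := List.getElem?_eq_getElem hup
    rw [hy] at this
    exact (Option.some.inj this).symm
  conv_lhs => rw [huu]
  rw [List.foldl_cons, h0]
  have hdec : (rr P i - 2) / 2 = i := rr_dec P i
  have hstep : step P (St.cnt (rr P i)) (some y) =
      (if (uu P i).length = 1 then St.F else St.tile i 1) := by
    show (if (rr P i - 2) / 2 < K P ∧ rr P ((rr P i - 2) / 2) = rr P i ∧
        (uu P ((rr P i - 2) / 2))[0]? = some (some y) then
        (if (uu P ((rr P i - 2) / 2)).length = 1 then St.F else St.tile ((rr P i - 2) / 2) 1)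
      else St.dead) = _
    rw [hdec, if_pos ⟨hi, rfl, hy⟩]
  rw [hstep]
  by_cases hlen : (uu P i).length = 1
  · rw [if_pos hlen]
    have : (uu P i).drop 1 = [] := by
      rw [List.drop_eq_nil_iff]; omega
    rw [this]; rfl
  · rw [if_neg hlen]
    exact run_tile P i _ 1 (by omega) rfl

theorem run_flatten (P : Inst) (hK : ∀ i, i < K P → GoodTile P i) :
    ∀ is : List ℕ, (∀ j ∈ is, j < K P) →
    ((is.map (block P)).flatten).foldl (step P) St.F = St.F := by
  intro is
  induction is with
  | nil => intro _; rfl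
  | cons i is ih =>
    intro hb
    simp only [List.map_cons, List.flatten_cons]
    rw [List.foldl_append]
    have hi : i < K P := hb i (by simp)
    rw [run_block P i hi (hK i hi) St.F (Or.inr rfl)]
    exact ih (fun j hj => hb j (by simp [hj]))

theorem inv_tile (P : Inst) (i : ℕ) : ∀ (l : List Sym) (p : ℕ), p < (uu P i).length →
    l.foldl (step P) (St.tile i p) = St.F →
    ∃ l2, l = (uu P i).drop p ++ l2 ∧ l2.foldl (step P) St.F = St.F ∧ l2.length < l.length := by
  intro l
  induction l with
  | nil => intro p _ h; exact St.noConfusion h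
  | cons x l ih =>
    intro p hp h
    rw [List.foldl_cons] at h
    by_cases hx : (uu P i)[p]? = some x
    · have hstep : step P (St.tile i p) x =
          (if p + 1 = (uu P i).length then St.F else St.tile i (p + 1)) := by
        show (if (uu P i)[p]? = some x then
          (if p + 1 = (uu P i).length then St.F else St.tile i (p + 1)) else St.dead) = _
        rw [if_pos hx]
      rw [hstep] at h
      have hxval : (uu P i)[p] = x := by
        obtain ⟨_, hh⟩ := List.getElem?_eq_some_iff.mp hx
        exact hh
      by_cases hlen : p + 1 = (uu P i).length
      · rw [if_pos hlen] at h
        refine ⟨l, ?_, h, by simp⟩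
        rw [List.drop_eq_getElem_cons hp, hxval]
        have : (uu P i).drop (p + 1) = [] := by
          rw [List.drop_eq_nil_iff]; omega
        rw [this]; rfl
      · rw [if_neg hlen] at h
        obtain ⟨l2, he, hf, hlt⟩ := ih (p + 1) (by omega) h
        refine ⟨l2, ?_, hf, by simp; omega⟩
        rw [List.drop_eq_getElem_cons hp, hxval, he]
        rfl
    · have hstep : step P (St.tile i p) x = St.dead := by
        show (if (uu P i)[p]? = some x then
          (if p + 1 = (uu P i).length then St.F else St.tile i (p + 1)) else St.dead) = _
        rw [if_neg hx]
      rw [hstep, run_dead] at h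
      exact St.noConfusion h

theorem inv_cnt (P : Inst) : ∀ (l : List Sym) (c : ℕ), 1 ≤ c → c ≤ M P →
    l.foldl (step P) (St.cnt c) = St.F →
    ∃ i l2, i < K P ∧ c ≤ rr P i ∧
      l = List.replicate (rr P i - c) (none : Sym) ++ (uu P i ++ l2) ∧
      l2.foldl (step P) St.F = St.F ∧ l2.length < l.length := by
  intro l
  induction l with
  | nil => intro c _ _ h; exact St.noConfusion h
  | cons x l ih =>
    intro c hc1 hc2 h
    rw [List.foldl_cons] at h
    cases x with
    | none =>
      by_cases hM : c + 1 ≤ M P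
      · have hstep : step P (St.cnt c) none = St.cnt (c + 1) := by
          show (if c + 1 ≤ M P then St.cnt (c + 1) else St.dead) = _
          rw [if_pos hM]
        rw [hstep] at h
        obtain ⟨i, l2, hi, hr, he, hf, hlt⟩ := ih (c + 1) (by omega) hM h
        refine ⟨i, l2, hi, by omega, ?_, hf, by simp; omega⟩
        have : rr P i - c = (rr P i - (c + 1)) + 1 := by omega
        rw [this, List.replicate_succ, List.cons_append, he]
      · have hstep : step P (St.cnt c) none = St.dead := by
          show (if c + 1 ≤ M P then St.cnt (c + 1) else St.dead) = _
          rw [if_neg hM]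
        rw [hstep, run_dead] at h
        exact St.noConfusion h
    | some y =>
      by_cases hcond : (c - 2) / 2 < K P ∧ rr P ((c - 2) / 2) = c ∧
          (uu P ((c - 2) / 2))[0]? = some (some y)
      · have hstep : step P (St.cnt c) (some y) =
            (if (uu P ((c - 2) / 2)).length = 1 then St.F else St.tile ((c - 2) / 2) 1) := by
          show (if (c - 2) / 2 < K P ∧ rr P ((c - 2) / 2) = c ∧
              (uu P ((c - 2) / 2))[0]? = some (some y) then
              (if (uu P ((c - 2) / 2)).length = 1 then St.F else St.tile ((c - 2) / 2) 1)
            else St.dead) = _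
          rw [if_pos hcond]
        rw [hstep] at h
        set i := (c - 2) / 2 with hidef
        obtain ⟨hiK, hrr, h0⟩ := hcond
        have hup : 0 < (uu P i).length := by
          by_contra hh
          rw [List.getElem?_eq_none (by omega)] at h0
          cases h0
        have h0v : (uu P i)[0] = some y := by
          obtain ⟨_, hh⟩ := List.getElem?_eq_some_iff.mp h0
          exact hh
        by_cases hlen : (uu P i).length = 1
        · rw [if_pos hlen] at h
          refine ⟨i, l, hiK, by omega, ?_, h, by simp⟩
          have huu : uu P i = [some y] := by
            obtain ⟨a, ha⟩ := List.length_eq_one_iff.mp hlen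
            have hay : a = some y := by
              rw [ha] at h0
              simpa using h0
            rw [ha, hay]
          rw [hrr]
          simp [huu]
        · rw [if_neg hlen] at h
          obtain ⟨l2, he, hf, hlt⟩ := inv_tile P i l 1 (by omega) h
          refine ⟨i, l2, hiK, by omega, ?_, hf, by simp; omega⟩
          rw [hrr]
          simp only [Nat.sub_self, List.replicate_zero, List.nil_append]
          have huu : uu P i = (uu P i)[0] :: (uu P i).drop 1 := by
            have := List.drop_eq_getElem_cons (l := uu P i) (i := 0) hup
            simpa using this
          rw [huu, h0v, he]
          rfl
      · have hstep : step P (St.cnt c) (some y) = St.dead := by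
          show (if (c - 2) / 2 < K P ∧ rr P ((c - 2) / 2) = c ∧
              (uu P ((c - 2) / 2))[0]? = some (some y) then
              (if (uu P ((c - 2) / 2)).length = 1 then St.F else St.tile ((c - 2) / 2) 1)
            else St.dead) = _
          rw [if_neg hcond]
        rw [hstep, run_dead] at h
        exact St.noConfusion h

theorem inv_F (P : Inst) : ∀ (n : ℕ) (l : List Sym), l.length ≤ n →
    l.foldl (step P) St.F = St.F →
    ∃ is : List ℕ, (∀ j ∈ is, j < K P) ∧ l = (is.map (block P)).flatten := by
  intro n
  induction n with
  | zero =>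
    intro l hl _
    have : l = [] := List.length_eq_zero_iff.mp (by omega)
    exact ⟨[], by simp, by simp [this]⟩
  | succ n ih =>
    intro l hl h
    cases l with
    | nil => exact ⟨[], by simp, by simp⟩
    | cons x l =>
      rw [List.foldl_cons] at h
      cases x with
      | some y =>
        have hstep : step P St.F (some y) = St.dead := by
          show (if (some y : Sym) = none then St.cnt 1 else St.dead) = _
          rw [if_neg (Option.some_ne_none y)]
        rw [hstep, run_dead] at h
        exact St.noConfusion h
      | none =>
        rw [step_F_none] at h
        obtain ⟨i, l2, hi, hr, he, hf, hlt⟩ := inv_cnt P l 1 (by omega)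
          (by have := M_ge P; omega) h
        simp only [List.length_cons] at hl
        obtain ⟨is, hb, he2⟩ := ih l2 (by omega) hf
        refine ⟨i :: is, ?_, ?_⟩
        · intro j hj
          rcases List.mem_cons.mp hj with h' | h'
          · rw [h']; exact hi
          · exact hb j h'
        · simp only [List.map_cons, List.flatten_cons]
          unfold block
          rw [he, he2]
          have hrr : 1 ≤ rr P i := by unfold rr; omega
          have h2 : (none : Sym) :: List.replicate (rr P i - 1) (none : Sym)
              = List.replicate (rr P i) (none : Sym) := by
            rw [← List.replicate_succ]
            congr 1
            omega
          calc (none : Sym) ::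
                (List.replicate (rr P i - 1) (none : Sym) ++ (uu P i ++ (is.map (block P)).flatten))
              = ((none : Sym) :: List.replicate (rr P i - 1) (none : Sym)) ++
                (uu P i ++ (is.map (block P)).flatten) := rfl
            _ = List.replicate (rr P i) (none : Sym) ++ (uu P i ++ (is.map (block P)).flatten) := by
                rw [h2]
            _ = (List.replicate (rr P i) (none : Sym) ++ uu P i) ++ (is.map (block P)).flatten := by
                rw [List.append_assoc]

theorem run_start_iff (P : Inst) (hK : ∀ i, i < K P → GoodTile P i) (w : List Sym) :
    w.foldl (step P) St.start = St.F ↔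
    ∃ is : List ℕ, is ≠ [] ∧ (∀ j ∈ is, j < K P) ∧ w = (is.map (block P)).flatten := by
  constructor
  · intro h
    have hne : w ≠ [] := by
      intro he
      rw [he] at h
      exact St.noConfusion h
    have hF : w.foldl (step P) St.F = St.F := by
      cases w with
      | nil => exact absurd rfl hne
      | cons x l =>
        rw [List.foldl_cons] at h ⊢
        rw [← step_start_eq_F]
        exact h
    obtain ⟨is, hb, he⟩ := inv_F P w.length w (le_refl _) hF
    refine ⟨is, ?_, hb, he⟩
    intro hnil
    rw [hnil] at he
    simp at he
    exact hne he
  · rintro ⟨is, hne, hb, rfl⟩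
    cases is with
    | nil => exact absurd rfl hne
    | cons i is =>
      simp only [List.map_cons, List.flatten_cons]
      rw [List.foldl_append]
      have hi : i < K P := hb i (by simp)
      rw [run_block P i hi (hK i hi) St.start (Or.inl rfl)]
      exact run_flatten P hK is (fun j hj => hb j (by simp [hj]))

end SR14

namespace SR14

theorem flat_len (P : Inst) (hK : ∀ i, i < K P → GoodTile P i) :
    ∀ is : List ℕ, (∀ j ∈ is, j < K P) → ((is.map (block P)).flatten).length % 2 = 0 := by
  intro is
  induction is with
  | nil => intro _; simp
  | cons i is ih =>
    intro hb
    simp only [List.map_cons, List.flatten_cons, List.length_append]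
    have h1 := block_length_even P i (hK i (hb i (by simp)))
    have h2 := ih (fun j hj => hb j (by simp [hj]))
    omega

theorem flat_odds (P : Inst) (hK : ∀ i, i < K P → GoodTile P i) :
    ∀ is : List ℕ, (∀ j ∈ is, j < K P) →
    (odds ((is.map (block P)).flatten)).reduceOption = (is.map (A P)).flatten := by
  intro is
  induction is with
  | nil => intro _; simp [odds]
  | cons i is ih =>
    intro hb
    have hi : i < K P := hb i (by simp)
    simp only [List.map_cons, List.flatten_cons]
    rw [odds_append _ _ (block_length_even P i (hK i hi)), List.reduceOption_append,
      block_odds P i (hK i hi), ih (fun j hj => hb j (by simp [hj]))]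

theorem flat_evens (P : Inst) (hK : ∀ i, i < K P → GoodTile P i) :
    ∀ is : List ℕ, (∀ j ∈ is, j < K P) →
    (evens ((is.map (block P)).flatten)).reduceOption = (is.map (B P)).flatten := by
  intro is
  induction is with
  | nil => intro _; simp [evens]
  | cons i is ih =>
    intro hb
    have hi : i < K P := hb i (by simp)
    simp only [List.map_cons, List.flatten_cons]
    rw [evens_append _ _ (block_length_even P i (hK i hi)), List.reduceOption_append,
      block_evens P i (hK i hi), ih (fun j hj => hb j (by simp [hj]))]

theorem caseB (P : Inst) (hK : ∀ i, i < K P → GoodTile P i) :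
    (∃ w : List Sym, codedAccepts (dfa P) w ∧ w ∈ ShuffledEq (Fin 2)) ↔
    (∃ is : List ℕ, is ≠ [] ∧ (∀ j ∈ is, j < K P) ∧
      (is.map (A P)).flatten = (is.map (B P)).flatten) := by
  constructor
  · rintro ⟨w, hacc, hsh⟩
    rw [accepts_iff, run_start_iff P hK] at hacc
    obtain ⟨is, hne, hb, rfl⟩ := hacc
    refine ⟨is, hne, hb, ?_⟩
    obtain ⟨_, heq⟩ := hsh
    rw [← flat_odds P hK is hb, ← flat_evens P hK is hb]
    exact heq
  · rintro ⟨is, hne, hb, heq⟩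
    refine ⟨(is.map (block P)).flatten, ?_, ?_⟩
    · rw [accepts_iff, run_start_iff P hK]
      exact ⟨is, hne, hb, rfl⟩
    · exact ⟨flat_len P hK is hb,
        by rw [flat_odds P hK is hb, flat_evens P hK is hb]; exact heq⟩

theorem A_eq_get (P : Inst) (j : ℕ) (h : j < P.length) :
    A P j = (P.get ⟨j, h⟩).1 := by
  unfold A
  rw [List.getD_eq_getElem _ _ h]
  rfl

theorem B_eq_get (P : Inst) (j : ℕ) (h : j < P.length) :
    B P j = (P.get ⟨j, h⟩).2 := by
  unfold B
  rw [List.getD_eq_getElem _ _ h]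
  rfl

theorem pcp_iff (P : Inst) : PCPSolvable P ↔
    ∃ is : List ℕ, is ≠ [] ∧ (∀ j ∈ is, j < K P) ∧
      (is.map (A P)).flatten = (is.map (B P)).flatten := by
  constructor
  · rintro ⟨is, hne, heq⟩
    refine ⟨is.map Fin.val, by simpa using hne, ?_, ?_⟩
    · intro j hj
      obtain ⟨i, _, rfl⟩ := List.mem_map.mp hj
      exact i.isLt
    · have h1 : (is.map Fin.val).map (A P) = is.map fun i => (P.get i).1 := by
        rw [List.map_map]
        apply List.map_congr_left
        intro i _
        exact A_eq_get P i.val i.isLt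
      have h2 : (is.map Fin.val).map (B P) = is.map fun i => (P.get i).2 := by
        rw [List.map_map]
        apply List.map_congr_left
        intro i _
        exact B_eq_get P i.val i.isLt
      rw [h1, h2, heq]
  · rintro ⟨is, hne, hb, heq⟩
    have hb' : ∀ j ∈ is, j < P.length := hb
    refine ⟨is.pmap (fun j h => (⟨j, h⟩ : Fin P.length)) hb', ?_, ?_⟩
    · intro h
      have := congrArg List.length h
      simp only [List.length_pmap, List.length_nil] at this
      exact hne (List.length_eq_zero_iff.mp this)
    · have key : ∀ (js : List ℕ) (hjs : ∀ j ∈ js, j < P.length),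
          ((js.pmap (fun j h => (⟨j, h⟩ : Fin P.length)) hjs).map (fun i => (P.get i).1)
            = js.map (A P)) ∧
          ((js.pmap (fun j h => (⟨j, h⟩ : Fin P.length)) hjs).map (fun i => (P.get i).2)
            = js.map (B P)) := by
        intro js
        induction js with
        | nil => intro _; exact ⟨rfl, rfl⟩
        | cons j js ih =>
          intro hjs
          have hj : j < P.length := hjs j (by simp)
          obtain ⟨ih1, ih2⟩ := ih (fun a ha => hjs a (by simp [ha]))
          constructor
          · simp only [List.pmap, List.map_cons]
            rw [ih1, ← A_eq_get P j hj]
          · simp only [List.pmap, List.map_cons]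
            rw [ih2, ← B_eq_get P j hj]
      obtain ⟨k1, k2⟩ := key is hb'
      rw [k1, k2, heq]

theorem condA_iff (P : Inst) : condA P = true ↔
    ∃ j, ∃ h : j < P.length, P[j].1 = [] ∧ P[j].2 = [] := by
  unfold condA
  rw [decide_eq_true_iff]
  rw [← List.prod_eq_foldr, List.prod_eq_zero_iff]
  constructor
  · intro h
    obtain ⟨t, ht, hv⟩ := List.mem_map.mp h
    obtain ⟨j, hj, rfl⟩ := List.mem_iff_getElem.mp ht
    refine ⟨j, hj, ?_, ?_⟩
    · have : P[j].1.length = 0 := by omega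
      exact List.length_eq_zero_iff.mp this
    · have : P[j].2.length = 0 := by omega
      exact List.length_eq_zero_iff.mp this
  · rintro ⟨j, hj, h1, h2⟩
    have : (0 : ℕ) = P[j].1.length + P[j].2.length := by rw [h1, h2]; rfl
    rw [this]
    exact List.mem_map_of_mem (List.getElem_mem hj)

theorem caseA_solvable (P : Inst) (h : condA P = true) : PCPSolvable P := by
  obtain ⟨j, hj, h1, h2⟩ := (condA_iff P).mp h
  refine ⟨[⟨j, hj⟩], by simp, ?_⟩
  simp only [List.map_cons, List.map_nil, List.flatten_cons, List.flatten_nil]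
  simp [h1, h2]

theorem main_iff (P : Inst) :
    (∃ w : List Sym, codedAccepts (g P) w ∧ w ∈ ShuffledEq (Fin 2)) ↔ PCPSolvable P := by
  by_cases h : condA P = true
  · unfold g
    rw [if_pos h]
    apply iff_of_true
    · refine ⟨[], ?_, ⟨rfl, rfl⟩⟩
      show ([] : List Sym).foldl _ 0 ∈ [0]
      simp
    · exact caseA_solvable P h
  · unfold g
    rw [if_neg h]
    have hK : ∀ i, i < K P → GoodTile P i := by
      intro i hi
      by_contra hgt
      unfold GoodTile at hgt
      push_neg at hgt
      obtain ⟨h1, h2⟩ := hgt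
      apply h
      rw [condA_iff]
      have hA : A P i = P[i].1 := by unfold A; rw [List.getD_eq_getElem _ _ hi]
      have hB : B P i = P[i].2 := by unfold B; rw [List.getD_eq_getElem _ _ hi]
      exact ⟨i, hi, by rw [← hA]; exact h1, by rw [← hB]; exact h2⟩
    rw [caseB P hK, ← pcp_iff P]

end SR14

namespace SR14

open Primrec

theorem hA : Primrec fun p : Inst × ℕ => A p.1 p.2 :=
  Primrec.fst.comp ((Primrec.list_getD (α := List (Fin 2) × List (Fin 2)) ([], [])).comp Primrec.fst Primrec.snd)

theorem hB : Primrec fun p : Inst × ℕ => B p.1 p.2 :=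
  Primrec.snd.comp ((Primrec.list_getD (α := List (Fin 2) × List (Fin 2)) ([], [])).comp Primrec.fst Primrec.snd)

theorem hlenA : Primrec fun p : Inst × ℕ => (A p.1 p.2).length :=
  Primrec.list_length.comp hA

theorem hlenB : Primrec fun p : Inst × ℕ => (B p.1 p.2).length :=
  Primrec.list_length.comp hB

theorem hnn : Primrec fun p : Inst × ℕ => nn p.1 p.2 :=
  Primrec.nat_max.comp hlenA hlenB

theorem hshift : Primrec fun p : Inst × ℕ => shift p.1 p.2 :=
  Primrec.ite (PrimrecRel.comp Primrec.eq hlenA (Primrec.const 0))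
    (Primrec.const 1) (Primrec.const 0)

theorem hrr : Primrec fun p : Inst × ℕ => rr p.1 p.2 :=
  Primrec.nat_add.comp
    (Primrec.nat_add.comp
      (Primrec.nat_mul.comp (Primrec.const 2) Primrec.snd) (Primrec.const 2))
    hshift

theorem hulen : Primrec fun p : Inst × ℕ => ulen p.1 p.2 :=
  Primrec.nat_sub.comp
    (Primrec.nat_mul.comp (Primrec.const 2) hnn) hshift

theorem hmapval : Primrec fun l : List (Fin 2) => l.map Fin.val :=
  Primrec.list_map Primrec.id (Primrec.fin_val.comp Primrec.snd).to₂

theorem hsymN : Primrec fun p : List (Fin 2) × ℕ => symN p.1 p.2 :=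
  (Primrec.list_getD (α := ℕ) 2).comp (hmapval.comp Primrec.fst) Primrec.snd

theorem hcoreN : Primrec fun x : (Inst × ℕ) × ℕ => coreN x.1.1 x.1.2 x.2 := by
  have hdiv2 : Primrec fun x : (Inst × ℕ) × ℕ => x.2 / 2 :=
    Primrec.nat_div.comp Primrec.snd (Primrec.const 2)
  exact Primrec.ite
    (PrimrecRel.comp Primrec.eq
      (Primrec.nat_mod.comp Primrec.snd (Primrec.const 2)) (Primrec.const 0))
    (hsymN.comp (Primrec.pair (hA.comp Primrec.fst) hdiv2))
    (hsymN.comp (Primrec.pair (hB.comp Primrec.fst) hdiv2))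

theorem huNidx : Primrec fun x : (Inst × ℕ) × ℕ => uNidx x.1.1 x.1.2 x.2 :=
  Primrec.ite
    (PrimrecRel.comp Primrec.nat_lt Primrec.snd (hulen.comp Primrec.fst))
    (hcoreN.comp (Primrec.pair Primrec.fst
      (Primrec.nat_add.comp Primrec.snd (hshift.comp Primrec.fst))))
    (Primrec.const 3)

theorem hM : Primrec fun P : Inst => M P :=
  Primrec.nat_add.comp
    (Primrec.nat_mul.comp (Primrec.const 2) Primrec.list_length) (Primrec.const 3)

theorem hlensums : Primrec fun P : Inst =>
    (P.map fun t => t.1.length + t.2.length).foldr (· + ·) 0 :=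
  Primrec.list_foldr
    (Primrec.list_map Primrec.id
      (Primrec.nat_add.comp
        (Primrec.list_length.comp (Primrec.fst.comp Primrec.snd))
        (Primrec.list_length.comp (Primrec.snd.comp Primrec.snd))).to₂)
    (Primrec.const 0)
    (Primrec.nat_add.comp (Primrec.fst.comp Primrec.snd)
      (Primrec.snd.comp Primrec.snd)).to₂

theorem hS : Primrec fun P : Inst => S P :=
  Primrec.nat_add.comp
    (Primrec.nat_mul.comp (Primrec.const 2) hlensums) (Primrec.const 2)

theorem hfnum : Primrec fun x : (Inst × ℕ) × ℕ => fnum x.1.1 x.1.2 x.2 := by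
  have hP : Primrec fun x : (Inst × ℕ) × ℕ => x.1.1 := Primrec.fst.comp Primrec.fst
  have hq : Primrec fun x : (Inst × ℕ) × ℕ => x.1.2 := Primrec.snd.comp Primrec.fst
  have ht : Primrec fun x : (Inst × ℕ) × ℕ => x.2 := Primrec.snd
  -- cnt-region tile index
  have hci : Primrec fun x : (Inst × ℕ) × ℕ => ((x.1.2 - 2) - 2) / 2 :=
    Primrec.nat_div.comp
      (Primrec.nat_sub.comp
        (Primrec.nat_sub.comp hq (Primrec.const 2)) (Primrec.const 2))
      (Primrec.const 2)
  have hPci : Primrec fun x : (Inst × ℕ) × ℕ => (x.1.1, ((x.1.2 - 2) - 2) / 2) :=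
    Primrec.pair hP hci
  -- tile-region decode
  have hbase : Primrec fun x : (Inst × ℕ) × ℕ => 3 + M x.1.1 :=
    Primrec.nat_add.comp (Primrec.const 3) (hM.comp hP)
  have hqs : Primrec fun x : (Inst × ℕ) × ℕ => x.1.2 - (3 + M x.1.1) :=
    Primrec.nat_sub.comp hq hbase
  have hti : Primrec fun x : (Inst × ℕ) × ℕ => (x.1.2 - (3 + M x.1.1)) / S x.1.1 :=
    Primrec.nat_div.comp hqs (hS.comp hP)
  have htp : Primrec fun x : (Inst × ℕ) × ℕ => (x.1.2 - (3 + M x.1.1)) % S x.1.1 :=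
    Primrec.nat_mod.comp hqs (hS.comp hP)
  have hPti : Primrec fun x : (Inst × ℕ) × ℕ => (x.1.1, (x.1.2 - (3 + M x.1.1)) / S x.1.1) :=
    Primrec.pair hP hti
  have e2 : Primrec fun x : (Inst × ℕ) × ℕ =>
      (if x.2 = 2 then (if x.1.2 - 1 ≤ M x.1.1 then x.1.2 + 1 else 0)
       else
        (if ((x.1.2 - 2) - 2) / 2 < K x.1.1 ∧
            rr x.1.1 (((x.1.2 - 2) - 2) / 2) = x.1.2 - 2 ∧
            uNidx x.1.1 (((x.1.2 - 2) - 2) / 2) 0 = x.2 then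
          (if ulen x.1.1 (((x.1.2 - 2) - 2) / 2) = 1 then 2
           else 3 + M x.1.1 + (((x.1.2 - 2) - 2) / 2) * S x.1.1 + 1)
        else 0)) := by
    apply Primrec.ite (PrimrecRel.comp Primrec.eq ht (Primrec.const 2))
    · exact Primrec.ite
        (PrimrecRel.comp Primrec.nat_le
          (Primrec.nat_sub.comp hq (Primrec.const 1)) (hM.comp hP))
        (Primrec.nat_add.comp hq (Primrec.const 1)) (Primrec.const 0)
    · apply Primrec.ite
      · exact PrimrecPred.and
          (PrimrecRel.comp Primrec.nat_lt hci (Primrec.list_length.comp hP))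
          (PrimrecPred.and
            (PrimrecRel.comp Primrec.eq (hrr.comp hPci)
              (Primrec.nat_sub.comp hq (Primrec.const 2)))
            (PrimrecRel.comp Primrec.eq
              (huNidx.comp (Primrec.pair hPci (Primrec.const 0))) ht))
      · exact Primrec.ite
          (PrimrecRel.comp Primrec.eq (hulen.comp hPci) (Primrec.const 1))
          (Primrec.const 2)
          (Primrec.nat_add.comp
            (Primrec.nat_add.comp hbase
              (Primrec.nat_mul.comp hci (hS.comp hP))) (Primrec.const 1))
      · exact Primrec.const 0
  have e3 : Primrec fun x : (Inst × ℕ) × ℕ =>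
      (if uNidx x.1.1 ((x.1.2 - (3 + M x.1.1)) / S x.1.1)
          ((x.1.2 - (3 + M x.1.1)) % S x.1.1) = x.2 then
        (if (x.1.2 - (3 + M x.1.1)) % S x.1.1 + 1
            = ulen x.1.1 ((x.1.2 - (3 + M x.1.1)) / S x.1.1) then 2
         else x.1.2 + 1)
      else 0) := by
    apply Primrec.ite
      (PrimrecRel.comp Primrec.eq (huNidx.comp (Primrec.pair hPti htp)) ht)
    · exact Primrec.ite
        (PrimrecRel.comp Primrec.eq
          (Primrec.nat_add.comp htp (Primrec.const 1)) (hulen.comp hPti))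
        (Primrec.const 2) (Primrec.nat_add.comp hq (Primrec.const 1))
    · exact Primrec.const 0
  have hmain : Primrec fun x : (Inst × ℕ) × ℕ =>
      (if x.1.2 = 0 then 0
       else if x.1.2 ≤ 2 then (if x.2 = 2 then 3 else 0)
       else if x.1.2 < 3 + M x.1.1 then
        (if x.2 = 2 then (if x.1.2 - 1 ≤ M x.1.1 then x.1.2 + 1 else 0)
         else
          (if ((x.1.2 - 2) - 2) / 2 < K x.1.1 ∧
              rr x.1.1 (((x.1.2 - 2) - 2) / 2) = x.1.2 - 2 ∧
              uNidx x.1.1 (((x.1.2 - 2) - 2) / 2) 0 = x.2 then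
            (if ulen x.1.1 (((x.1.2 - 2) - 2) / 2) = 1 then 2
             else 3 + M x.1.1 + (((x.1.2 - 2) - 2) / 2) * S x.1.1 + 1)
          else 0))
       else
        (if uNidx x.1.1 ((x.1.2 - (3 + M x.1.1)) / S x.1.1)
            ((x.1.2 - (3 + M x.1.1)) % S x.1.1) = x.2 then
          (if (x.1.2 - (3 + M x.1.1)) % S x.1.1 + 1
              = ulen x.1.1 ((x.1.2 - (3 + M x.1.1)) / S x.1.1) then 2
           else x.1.2 + 1)
        else 0)) := by
    apply Primrec.ite (PrimrecRel.comp Primrec.eq hq (Primrec.const 0)) (Primrec.const 0)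
    apply Primrec.ite (PrimrecRel.comp Primrec.nat_le hq (Primrec.const 2))
    · exact Primrec.ite (PrimrecRel.comp Primrec.eq ht (Primrec.const 2))
        (Primrec.const 3) (Primrec.const 0)
    · exact Primrec.ite (PrimrecRel.comp Primrec.nat_lt hq hbase) e2 e3
  exact hmain.of_eq (fun x => by rw [fnum])

theorem hN : Primrec fun P : Inst => N P :=
  Primrec.nat_add.comp
    (Primrec.nat_add.comp (Primrec.const 3) hM)
    (Primrec.nat_mul.comp Primrec.list_length hS)

theorem htbl : Primrec fun P : Inst => tbl P := by
  have hf : ∀ t : ℕ, Primrec fun p : Inst × ℕ => fnum p.1 p.2 t := fun t =>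
    hfnum.comp (Primrec.pair Primrec.id (Primrec.const t))
  have hrow : Primrec fun p : Inst × ℕ => [fnum p.1 p.2 0, fnum p.1 p.2 1, fnum p.1 p.2 2] :=
    Primrec.list_cons.comp (hf 0)
      (Primrec.list_cons.comp (hf 1)
        (Primrec.list_cons.comp (hf 2) (Primrec.const [])))
  exact Primrec.list_map (Primrec.list_range.comp hN) hrow.to₂

theorem hdfa : Primrec fun P : Inst => dfa P :=
  Primrec.pair hN (Primrec.pair htbl (Primrec.pair (Primrec.const 1) (Primrec.const [2])))

theorem hcondA : Primrec condA :=
  PrimrecPred.decide <| PrimrecRel.comp Primrec.eq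
    ((Primrec.list_foldr
      (Primrec.list_map Primrec.id
        (Primrec.nat_add.comp
          (Primrec.list_length.comp (Primrec.fst.comp Primrec.snd))
          (Primrec.list_length.comp (Primrec.snd.comp Primrec.snd))).to₂)
      (Primrec.const 1)
      (Primrec.nat_mul.comp (Primrec.fst.comp Primrec.snd)
        (Primrec.snd.comp Primrec.snd)).to₂))
    (Primrec.const 0)

theorem hg : Computable g := by
  have : Primrec g := by
    have h := Primrec.cond hcondA
      (Primrec.const ((1 : ℕ), ([[0, 0, 0]] : List (List ℕ)), (0 : ℕ), ([0] : List ℕ))) hdfa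
    exact h.of_eq (fun P => by
      unfold g
      cases hc : condA P <;> simp [hc])
  exact this.to_comp

end SR14


/-- Assuming PCP over a binary alphabet is undecidable, the regular intersection
emptiness problem of Shuffled String Equivalence Modulo Padding over a binary alphabet is
undecidable: there is no algorithm deciding, given a (coded) DFA `A` over `{0,1,ε}`,
whether `L(A)` contains a word `s₁t₁…sₙtₙ` with `h(s₁…sₙ) = h(t₁…tₙ)`. -/
theorem stmt_14
    (hPCP : ¬ ComputablePred fun P : List (List (Fin 2) × List (Fin 2)) => PCPSolvable P) :
    ¬ ComputablePred fun D : ℕ × List (List ℕ) × ℕ × List ℕ =>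
      ∃ w : List (Option (Fin 2)), codedAccepts D w ∧ w ∈ ShuffledEq (Fin 2) := by
  intro hQ
  apply hPCP
  obtain ⟨f, hf, hfe⟩ := ComputablePred.computable_iff.1 hQ
  refine ComputablePred.computable_iff.2 ⟨fun P => f (SR14.g P), hf.comp SR14.hg, ?_⟩
  funext P
  apply propext
  have h2 : (∃ w : List (Option (Fin 2)), codedAccepts (SR14.g P) w ∧ w ∈ ShuffledEq (Fin 2))
      ↔ (f (SR14.g P) : Prop) := iff_of_eq (congrFun hfe (SR14.g P))
  exact (SR14.main_iff P).symm.trans h2
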